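/- Define a metric m_C on the edges of G*π by well-founded recursion on the minimum rank of an edge's endpoints: m_C(x,y) = min( w₀(x,y), min over all lower triangles {x,y,z} of {x,y} of (m_C(x,z) + m_C(z,y)) ), where w₀(x,y) = w(x,y) if {x,y} is an edge of G and w₀(x,y) = ∞ otherwise. (The recursion is well-founded because for every lower triangle {x,y,z}, the edges {x,z} and {z,y} have strictly smaller minimum endpoint rank than {x,y}.) Then m_C fulfills the lower triangle inequality and respects w; consequently m_C is customized. -/

import Mathlib

open SimpleGraph
open scoped ENNReal

variable {V : Type*}

/-- One step of vertex contraction: remove `v` from the current graph and add an edge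
between every pair of its current neighbors. -/
def chStep (H : SimpleGraph V) (v : V) : SimpleGraph V where
  Adj a b := a ≠ b ∧ a ≠ v ∧ b ≠ v ∧ (H.Adj a b ∨ (H.Adj v a ∧ H.Adj v b))
  symm := by
    constructor
    rintro a b ⟨h1, h2, h3, h4⟩
    refine ⟨h1.symm, h3, h2, ?_⟩
    rcases h4 with h | ⟨ha, hb⟩
    · exact Or.inl h.symm
    · exact Or.inr ⟨hb, ha⟩
  loopless := ⟨fun a h => h.1 rfl⟩

lemma chStep_adj {H : SimpleGraph V} {v a b : V} : (chStep H v).Adj a b ↔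
    (a ≠ b ∧ a ≠ v ∧ b ≠ v ∧ (H.Adj a b ∨ (H.Adj v a ∧ H.Adj v b))) := Iff.rfl

/-- All edges ever present while contracting the vertices of the list in order:
the edges of the initial graph together with all added shortcuts. -/
def chList : SimpleGraph V → List V → SimpleGraph V
  | H, [] => H
  | H, v :: l => H ⊔ chList (chStep H v) l

/-- The rank of a vertex with respect to the contraction order `π`. -/
def rk {n : ℕ} (π : Fin n ≃ V) (v : V) : ℕ := (π.symm v : ℕ)

/-- The contraction hierarchy `G*π`: contract `π 0, π 1, …` in this order and collect
all original edges and all added shortcuts. -/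
def chGraph {n : ℕ} (G : SimpleGraph V) (π : Fin n ≃ V) : SimpleGraph V :=
  chList G ((List.finRange n).map ⇑π)

/-- A list of vertices is up-down w.r.t. a rank function: ranks strictly increase
along a prefix and strictly decrease along the remaining suffix, the two parts
meeting at the maximum-rank vertex. -/
def IsUpDown (r : V → ℕ) (l : List V) : Prop :=
  ∃ l₁ x l₂, l = l₁ ++ x :: l₂ ∧
    List.Chain' (fun a b => r a < r b) (l₁ ++ [x]) ∧
    List.Chain' (fun a b => r b < r a) (x :: l₂)

/-- Reachability in the upward directed graph `G^∧π` (edges of `G*π` directed from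
lower to higher rank): the vertex set of the search space `SS v`. -/
def UpReach {n : ℕ} (G : SimpleGraph V) (π : Fin n ≃ V) (v u : V) : Prop :=
  Relation.ReflTransGen (fun a b => (chGraph G π).Adj a b ∧ rk π a < rk π b) v u

/-- Length of a walk: the sum of the weights of its edges. -/
noncomputable def wlen {H : SimpleGraph V} (m : V → V → ℝ≥0∞) {s t : V}
    (p : H.Walk s t) : ℝ≥0∞ :=
  (p.darts.map (fun d => m d.toProd.1 d.toProd.2)).sum

/-- Shortest path distance in a graph `H` under edge weights `m`. -/
noncomputable def gdist (H : SimpleGraph V) (m : V → V → ℝ≥0∞) (s t : V) : ℝ≥0∞ :=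
  ⨅ (p : H.Walk s t), wlen m p

/-- Minimum length of an up-down `s`-`t` path in `G*π`. -/
noncomputable def updist {n : ℕ} (G : SimpleGraph V) (π : Fin n ≃ V)
    (m : V → V → ℝ≥0∞) (s t : V) : ℝ≥0∞ :=
  ⨅ (p : (chGraph G π).Walk s t) (_ : IsUpDown (rk π) p.support), wlen m p

/-- Minimum length of a strictly rank-increasing `u`-`v` path in `G*π`. -/
noncomputable def upOnlyDist {n : ℕ} (G : SimpleGraph V) (π : Fin n ≃ V)
    (m : V → V → ℝ≥0∞) (u v : V) : ℝ≥0∞ :=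
  ⨅ (p : (chGraph G π).Walk u v)
    (_ : List.Chain' (fun a b => rk π a < rk π b) p.support), wlen m p

/-- `S` is a balanced separator of the subgraph of `G` induced by `U`. -/
def IsBalancedSepOn [DecidableEq V] (G : SimpleGraph V) (U S : Finset V) : Prop :=
  S ⊆ U ∧ ∃ A B : Finset V, A ⊆ U ∧ B ⊆ U ∧
    Disjoint A B ∧ Disjoint A S ∧ Disjoint B S ∧ A ∪ B ∪ S = U ∧
    (∀ a ∈ A, ∀ b ∈ B, ¬ G.Adj a b) ∧
    3 * A.card ≤ 2 * U.card ∧ 3 * B.card ≤ 2 * U.card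

/-- Nested dissection orders (as lists, earliest contracted first, separator last)
of induced subgraphs of `G`, in which the separator chosen at every recursion step on
a `k`-vertex subgraph is balanced and has cardinality at most `c * k ^ α`. -/
inductive IsNDOrder [DecidableEq V] (G : SimpleGraph V) (c α : ℝ) : Finset V → List V → Prop
  | empty : IsNDOrder G c α ∅ []
  | step {U S A B : Finset V} {lA lB lS : List V} :
      Disjoint A B → Disjoint A S → Disjoint B S → A ∪ B ∪ S = U →
      (∀ a ∈ A, ∀ b ∈ B, ¬ G.Adj a b) →
      3 * A.card ≤ 2 * U.card → 3 * B.card ≤ 2 * U.card →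
      ((S.card : ℝ) ≤ c * (U.card : ℝ) ^ α) →
      lS.Nodup → lS.toFinset = S →
      IsNDOrder G c α A lA → IsNDOrder G c α B lB →
      IsNDOrder G c α U (lA ++ lB ++ lS)

/-- Number of vertices of the search space `SS v` in `G^∧π`. -/
noncomputable def nVertsSS {n : ℕ} (G : SimpleGraph V) (π : Fin n ≃ V) (v : V) : ℕ :=
  {u | UpReach G π v u}.ncard

/-- Number of arcs of the search space `SS v` in `G^∧π`: arcs of `G^∧π` with both
endpoints reachable from `v`. -/
noncomputable def nArcsSS {n : ℕ} (G : SimpleGraph V) (π : Fin n ≃ V) (v : V) : ℕ :=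
  {q : V × V | (chGraph G π).Adj q.1 q.2 ∧ rk π q.1 < rk π q.2 ∧
    UpReach G π v q.1 ∧ UpReach G π v q.2}.ncard

/-- The rank sequence of a walk: for each edge, the minimum of the ranks of its
endpoints, sorted in decreasing order. -/
def rankSeq {H : SimpleGraph V} (r : V → ℕ) {s t : V} (p : H.Walk s t) : List ℕ :=
  (p.darts.map (fun d => min (r d.toProd.1) (r d.toProd.2))).insertionSort (· ≥ ·)

/-- Directed length of a walk in `G*π` under a pair of directed metrics `(mu, md)`:
each edge traversed from lower rank to higher rank costs its upward weight,
each edge traversed from higher rank to lower rank costs its downward weight. -/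
noncomputable def dlen {H : SimpleGraph V} (r : V → ℕ) (mu md : V → V → ℝ≥0∞)
    {s t : V} (p : H.Walk s t) : ℝ≥0∞ :=
  (p.darts.map (fun d =>
    if r d.toProd.1 < r d.toProd.2 then mu d.toProd.1 d.toProd.2
    else md d.toProd.2 d.toProd.1)).sum

/-- Length of a directed walk `s :: l` under arc weights `wD`. -/
noncomputable def dWalkLen (wD : V → V → ℝ≥0∞) : V → List V → ℝ≥0∞
  | _, [] => 0
  | s, x :: l => wD s x + dWalkLen wD x l

/-- Shortest directed path distance in the directed graph `D` under arc weights `wD`. -/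
noncomputable def ddist (D : V → V → Prop) (wD : V → V → ℝ≥0∞) (s t : V) : ℝ≥0∞ :=
  ⨅ (l : List V) (_ : List.Chain D s l ∧ l.getLastD s = t), dWalkLen wD s l

section AuxCH

lemma le_chList (l : List V) : ∀ (H : SimpleGraph V), H ≤ chList H l := by
  induction l with
  | nil => intro H; exact le_rfl
  | cons v l ih => intro H; exact le_sup_left

lemma chList_no (v : V) (l : List V) :
    ∀ (H : SimpleGraph V), (∀ a, ¬ H.Adj v a) → ∀ a, ¬ (chList H l).Adj v a := by
  induction l with
  | nil => intro H h; exact h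
  | cons u l ih =>
    intro H h a hadj
    rw [chList] at hadj
    rcases hadj with h' | h'
    · exact h a h'
    · refine ih (chStep H u) ?_ a h'
      rintro b hb
      rcases chStep_adj.mp hb with ⟨hne, hvu, hbu, hH | ⟨h1, h2⟩⟩
      · exact h b hH
      · exact h u h1.symm

lemma chList_cons_adj {H : SimpleGraph V} {v a b : V} (l : List V)
    (ha : a ≠ v) (hb : b ≠ v) (h : (chList H (v :: l)).Adj a b) :
    (chList (chStep H v) l).Adj a b := by
  rw [chList] at h
  rcases h with h | h
  · exact le_chList l (chStep H v) (chStep_adj.mpr ⟨h.ne, ha, hb, Or.inl h⟩)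
  · exact h

lemma chList_valley : ∀ (l₁ : List V) (H : SimpleGraph V) {z : V} {l₂ : List V} {x y : V},
    (l₁ ++ z :: l₂).Nodup → x ∈ l₂ → y ∈ l₂ → x ≠ y →
    (chList H (l₁ ++ z :: l₂)).Adj x z → (chList H (l₁ ++ z :: l₂)).Adj z y →
    (chList H (l₁ ++ z :: l₂)).Adj x y := by
  intro l₁
  induction l₁ with
  | nil =>
    intro H z l₂ x y hnd hx hy hxy hxz hzy
    simp only [List.nil_append] at *
    have hzl : z ∉ l₂ := (List.nodup_cons.mp hnd).1
    rw [chList] at hxz hzy ⊢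
    have hno : ∀ a, ¬ (chList (chStep H z) l₂).Adj z a :=
      chList_no z l₂ _ (fun a h => (chStep_adj.mp h).2.1 rfl)
    have hxzH : H.Adj x z := by
      rcases hxz with h | h
      · exact h
      · exact absurd h.symm (hno x)
    have hzyH : H.Adj z y := by
      rcases hzy with h | h
      · exact h
      · exact absurd h (hno y)
    right
    exact le_chList l₂ (chStep H z)
      (chStep_adj.mpr ⟨hxy, fun h => hzl (h ▸ hx), fun h => hzl (h ▸ hy), Or.inr ⟨hxzH.symm, hzyH⟩⟩)
  | cons v l₁ ih =>
    intro H z l₂ x y hnd hx hy hxy hxz hzy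
    rw [List.cons_append] at hnd hxz hzy ⊢
    have hv : v ∉ l₁ ++ z :: l₂ := (List.nodup_cons.mp hnd).1
    have hmem : ∀ u : V, u ∈ l₂ → u ∈ l₁ ++ z :: l₂ := by
      intro u hu; exact List.mem_append_right _ (List.mem_cons_of_mem _ hu)
    have hxv : x ≠ v := fun h => hv (h ▸ hmem x hx)
    have hyv : y ≠ v := fun h => hv (h ▸ hmem y hy)
    have hzv : z ≠ v := fun h => hv (h ▸ List.mem_append_right _ List.mem_cons_self)
    have h1 := chList_cons_adj _ hxv hzv hxz
    have h2 := chList_cons_adj _ hzv hyv hzy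
    have := ih (chStep H v) (List.nodup_cons.mp hnd).2 hx hy hxy h1 h2
    rw [chList]
    exact Or.inr this

lemma rk_lt_length {n : ℕ} (π : Fin n ≃ V) (v : V) : rk π v < n := (π.symm v).isLt

lemma rk_inj {n : ℕ} (π : Fin n ≃ V) {a b : V} (h : rk π a = rk π b) : a = b := by
  have := Fin.val_injective h
  exact π.symm.injective this

lemma chGraph_valley {n : ℕ} (G : SimpleGraph V) (π : Fin n ≃ V) {x y z : V}
    (hxz : (chGraph G π).Adj x z) (hzy : (chGraph G π).Adj z y)
    (h1 : rk π z < rk π x) (h2 : rk π z < rk π y) (hxy : x ≠ y) :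
    (chGraph G π).Adj x y := by
  set l : List V := (List.finRange n).map ⇑π with hl
  have hlen : l.length = n := by simp [hl]
  have hget : ∀ (k : ℕ) (hk : k < n), l[k]'(by omega) = π ⟨k, hk⟩ := by
    intro k hk
    simp [hl]
  have hnd : l.Nodup := (List.nodup_finRange n).map π.injective
  have hiz : l[rk π z]'(by rw [hlen]; exact rk_lt_length π z) = z := by
    rw [hget _ (rk_lt_length π z)]
    simp [rk]
  have hsplit : l = l.take (rk π z) ++ z :: l.drop (rk π z + 1) := by
    conv_lhs => rw [← List.take_append_drop (rk π z) l]
    rw [List.drop_eq_getElem_cons (by rw [hlen]; exact rk_lt_length π z), hiz]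
  have hmemdrop : ∀ u : V, rk π z < rk π u → u ∈ l.drop (rk π z + 1) := by
    intro u hu
    have hul : rk π u < l.length := by rw [hlen]; exact rk_lt_length π u
    have hgetu : ∀ (hh : rk π u < l.length), l[rk π u]'hh = u := by
      intro hh; rw [hget _ (rk_lt_length π u)]; simp [rk]
    have hu2 : rk π z + 1 + (rk π u - (rk π z + 1)) = rk π u := by omega
    have h3 : rk π z + 1 + (rk π u - (rk π z + 1)) < l.length := by omega
    have h5 : l[rk π z + 1 + (rk π u - (rk π z + 1))]'h3 = u := by
      simp only [hu2]; exact hgetu hul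
    rw [← h5, List.getElem_drop']
    exact List.getElem_mem _
  have hx' : x ∈ l.drop (rk π z + 1) := hmemdrop x h1
  have hy' : y ∈ l.drop (rk π z + 1) := hmemdrop y h2
  have key := chList_valley (l.take (rk π z)) G (hsplit ▸ hnd) hx' hy' hxy
  unfold chGraph at hxz hzy ⊢
  rw [← hl] at hxz hzy ⊢
  rw [hsplit] at hxz hzy ⊢
  exact key hxz hzy

end AuxCH


section AuxUD

lemma isUpDown_singleton (r : V → ℕ) (x : V) : IsUpDown r [x] :=
  ⟨[], x, [], rfl, List.isChain_singleton x, List.isChain_singleton x⟩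

lemma isUpDown_of_desc {r : V → ℕ} {x : V} {l : List V}
    (h : List.Chain' (fun a b => r b < r a) (x :: l)) : IsUpDown r (x :: l) :=
  ⟨[], x, l, rfl, List.isChain_singleton x, h⟩

lemma isUpDown_cons {r : V → ℕ} {s x : V} {l : List V}
    (hud : IsUpDown r (x :: l)) (hs : r s < r x) : IsUpDown r (s :: x :: l) := by
  obtain ⟨l₁, p, l₂, he, hup, hdn⟩ := hud
  cases l₁ with
  | nil =>
    simp only [List.nil_append] at he
    injection he with h1 h2
    subst h1; subst h2
    exact ⟨[s], x, l, rfl, List.isChain_pair.mpr hs, hdn⟩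
  | cons a l₁ =>
    rw [List.cons_append] at he
    injection he with h1 h2
    subst h1
    refine ⟨s :: x :: l₁, p, l₂, by rw [h2, List.cons_append, List.cons_append], ?_, hdn⟩
    rw [List.cons_append]
    exact List.isChain_cons_cons.mpr ⟨hs, by rwa [List.cons_append] at hup⟩

lemma isUpDown_desc_of_head {r : V → ℕ} {x y : V} {l : List V}
    (hud : IsUpDown r (x :: y :: l)) (hxy : r y < r x) :
    List.Chain' (fun a b => r b < r a) (x :: y :: l) := by
  obtain ⟨l₁, p, l₂, he, hup, hdn⟩ := hud
  cases l₁ with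
  | nil =>
    simp only [List.nil_append] at he
    injection he with h1 h2
    subst h1
    rw [← h2] at hdn
    exact hdn
  | cons a l₁ =>
    rw [List.cons_append] at he
    injection he with h1 h2
    subst h1
    exfalso
    cases l₁ with
    | nil =>
      simp only [List.nil_append] at h2
      injection h2 with h3 h4
      subst h3
      simp only [List.cons_append, List.nil_append] at hup
      exact absurd (List.isChain_pair.mp hup) (lt_asymm hxy)
    | cons b l₁ =>
      rw [List.cons_append] at h2
      injection h2 with h3 h4
      subst h3
      rw [List.cons_append, List.cons_append] at hup
      exact absurd (List.isChain_cons_cons.mp hup).1 (lt_asymm hxy)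

lemma isUpDown_tail {r : V → ℕ} {x y : V} {l : List V}
    (hud : IsUpDown r (x :: y :: l)) (hxy : r x < r y) : IsUpDown r (y :: l) := by
  obtain ⟨l₁, p, l₂, he, hup, hdn⟩ := hud
  cases l₁ with
  | nil =>
    simp only [List.nil_append] at he
    injection he with h1 h2
    subst h1
    rw [← h2] at hdn
    exact absurd (List.isChain_cons_cons.mp hdn).1 (lt_asymm hxy)
  | cons a l₁ =>
    rw [List.cons_append] at he
    injection he with h1 h2
    subst h1
    refine ⟨l₁, p, l₂, h2, ?_, hdn⟩
    rw [List.cons_append] at hup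
    exact hup.tail

lemma wlen_nil {H : SimpleGraph V} (m : V → V → ℝ≥0∞) {s : V} :
    wlen m (Walk.nil : H.Walk s s) = 0 := by simp [wlen]

lemma wlen_cons {H : SimpleGraph V} (m : V → V → ℝ≥0∞) {s x t : V}
    (h : H.Adj s x) (p : H.Walk x t) :
    wlen m (Walk.cons h p) = m s x + wlen m p := by simp [wlen]

lemma prependUpDown {n : ℕ} (G : SimpleGraph V) (π : Fin n ≃ V) (m : V → V → ℝ≥0∞)
    (hLT : ∀ x y z : V, (chGraph G π).Adj x y → (chGraph G π).Adj x z →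
      (chGraph G π).Adj z y → rk π z < rk π x → rk π z < rk π y →
      m x y ≤ m x z + m z y) (t : V) :
    ∀ (N : ℕ) {x : V} (q : (chGraph G π).Walk x t), q.length ≤ N →
      IsUpDown (rk π) q.support → ∀ s : V, (chGraph G π).Adj s x →
      ∃ q₂ : (chGraph G π).Walk s t, IsUpDown (rk π) q₂.support ∧
        wlen m q₂ ≤ m s x + wlen m q := by
  intro N
  induction N with
  | zero =>
    intro x q hq hud s hs
    have hr : rk π s ≠ rk π x := fun h => hs.ne (rk_inj π h)
    rcases lt_or_gt_of_ne hr with hup | hdown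
    · refine ⟨Walk.cons hs q, ?_, le_of_eq (wlen_cons m hs q)⟩
      rw [Walk.support_cons, q.support_eq_cons] at *
      exact isUpDown_cons hud hup
    · cases q with
      | nil =>
        refine ⟨Walk.cons hs Walk.nil, ?_, le_of_eq (wlen_cons m hs Walk.nil)⟩
        rw [Walk.support_cons, Walk.support_nil]
        exact isUpDown_of_desc (List.isChain_pair.mpr hdown)
      | cons h' q' =>
        rw [Walk.length_cons] at hq
        omega
  | succ N ih =>
    intro x q hq hud s hs
    have hr : rk π s ≠ rk π x := fun h => hs.ne (rk_inj π h)
    rcases lt_or_gt_of_ne hr with hup | hdown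
    · refine ⟨Walk.cons hs q, ?_, le_of_eq (wlen_cons m hs q)⟩
      rw [Walk.support_cons, q.support_eq_cons] at *
      exact isUpDown_cons hud hup
    · cases q with
      | nil =>
        refine ⟨Walk.cons hs Walk.nil, ?_, le_of_eq (wlen_cons m hs Walk.nil)⟩
        rw [Walk.support_cons, Walk.support_nil]
        exact isUpDown_of_desc (List.isChain_pair.mpr hdown)
      | @cons _ y _ h' q' =>
        have hyt : rk π x ≠ rk π y := fun h => h'.ne (rk_inj π h)
        have hsupp : q'.support = y :: q'.support.tail := q'.support_eq_cons
        have hudq : IsUpDown (rk π) (x :: y :: q'.support.tail) := by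
          rw [Walk.support_cons, hsupp] at hud; exact hud
        rcases lt_or_gt_of_ne hyt with hxy | hxy
        · -- rk x < rk y : valley at x
          have hud' : IsUpDown (rk π) q'.support := by
            rw [hsupp]; exact isUpDown_tail hudq hxy
          by_cases hsy : s = y
          · subst hsy
            refine ⟨q', hud', ?_⟩
            rw [wlen_cons]
            exact le_trans (self_le_add_left _ _) (self_le_add_left _ _)
          · have hsy2 : (chGraph G π).Adj s y := chGraph_valley G π hs h' hdown hxy hsy
            have hq' : q'.length ≤ N := by rw [Walk.length_cons] at hq; omega
            obtain ⟨q₂, hud₂, hlen₂⟩ := ih q' hq' hud' s hsy2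
            refine ⟨q₂, hud₂, ?_⟩
            have h3 : m s y ≤ m s x + m x y := hLT s y x hsy2 hs h' hdown hxy
            calc wlen m q₂ ≤ m s y + wlen m q' := hlen₂
              _ ≤ (m s x + m x y) + wlen m q' := add_le_add_left h3 _
              _ = m s x + (m x y + wlen m q') := add_assoc _ _ _
              _ = m s x + wlen m (Walk.cons h' q') := by rw [wlen_cons]
        · -- rk y < rk x : everything descends
          have hdesc := isUpDown_desc_of_head hudq hxy
          refine ⟨Walk.cons hs (Walk.cons h' q'), ?_,
            le_of_eq (wlen_cons m hs (Walk.cons h' q'))⟩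
          rw [Walk.support_cons, Walk.support_cons, hsupp]
          exact isUpDown_of_desc (List.isChain_cons_cons.mpr ⟨hdown, hdesc⟩)

end AuxUD


/-- The metric `m_C` defined by the well-founded recurrence
`m_C x y = min (w₀ x y) (min over lower triangles {x,y,z} of m_C x z + m_C z y)`
(where `w₀ x y = w x y` for edges of `G` and `∞` otherwise) fulfills the lower
triangle inequality and respects `w`; consequently it is customized. -/
theorem stmt14 {V : Type*} {n : ℕ} (G : SimpleGraph V) [DecidableRel G.Adj]
    (hG : G.Connected) (π : Fin n ≃ V) (w : V → V → ℝ≥0∞)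
    (hw_symm : ∀ a b, w a b = w b a)
    (hw_pos : ∀ a b, G.Adj a b → 0 < w a b ∧ w a b < ⊤)
    (m : V → V → ℝ≥0∞) (hm_symm : ∀ a b, m a b = m b a)
    (hrec : ∀ x y, (chGraph G π).Adj x y →
      m x y = min (if G.Adj x y then w x y else ⊤)
        (⨅ (z : V) (_ : (chGraph G π).Adj x z ∧ (chGraph G π).Adj z y ∧
          rk π z < rk π x ∧ rk π z < rk π y), (m x z + m z y))) :
    (∀ x y z, (chGraph G π).Adj x y → (chGraph G π).Adj x z →
      (chGraph G π).Adj z y → rk π z < rk π x → rk π z < rk π y →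
      m x y ≤ m x z + m z y) ∧
    (∀ s t, gdist (chGraph G π) m s t = gdist G w s t) ∧
    (∀ s t, updist G π m s t = gdist (chGraph G π) m s t) := by
  classical
  have part1 : ∀ x y z, (chGraph G π).Adj x y → (chGraph G π).Adj x z →
      (chGraph G π).Adj z y → rk π z < rk π x → rk π z < rk π y →
      m x y ≤ m x z + m z y := by
    intro x y z hxy hxz hzy h1 h2
    rw [hrec x y hxy]
    exact (min_le_right _ _).trans (iInf₂_le z ⟨hxz, hzy, h1, h2⟩)
  have hGle : G ≤ chGraph G π := le_chList _ G
  have hm_le_w : ∀ x y, G.Adj x y → m x y ≤ w x y := by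
    intro x y h
    rw [hrec x y (hGle h)]
    exact (min_le_left _ _).trans_eq (if_pos h)
  have gdist_le_wlen : ∀ (H : SimpleGraph V) (mm : V → V → ℝ≥0∞) (s t : V) (p : H.Walk s t),
      gdist H mm s t ≤ wlen mm p := fun H mm s t p => iInf_le _ p
  have gdist_tri : ∀ (H : SimpleGraph V) (mm : V → V → ℝ≥0∞) (s z t : V),
      gdist H mm s t ≤ gdist H mm s z + gdist H mm z t := by
    intro H mm s z t
    unfold gdist
    rw [ENNReal.iInf_add]
    refine le_iInf fun p => ?_
    rw [ENNReal.add_iInf]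
    refine le_iInf fun q => ?_
    refine (iInf_le _ (p.append q)).trans_eq ?_
    simp [wlen, SimpleGraph.Walk.darts_append]
  have gdist_edge : ∀ x y, G.Adj x y → gdist G w x y ≤ w x y := by
    intro x y h
    refine (gdist_le_wlen G w x y (Walk.cons h Walk.nil)).trans_eq ?_
    simp [wlen]
  have hm_ge : ∀ x y, (chGraph G π).Adj x y → gdist G w x y ≤ m x y := by
    have key : ∀ (k : ℕ) (x y : V), (chGraph G π).Adj x y → min (rk π x) (rk π y) < k →
        gdist G w x y ≤ m x y := by
      intro k
      induction k with
      | zero => intro x y _ h; exact absurd h (Nat.not_lt_zero _)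
      | succ k ih =>
        intro x y hxy hk
        rw [hrec x y hxy]
        refine le_min ?_ ?_
        · split_ifs with hG'
          · exact gdist_edge x y hG'
          · exact le_top
        · refine le_iInf fun z => le_iInf fun hz => ?_
          obtain ⟨hxz, hzy, h1, h2⟩ := hz
          have hz1 : min (rk π x) (rk π z) < k :=
            lt_of_le_of_lt (min_le_right _ _)
              (lt_of_lt_of_le (lt_min h1 h2) (Nat.lt_succ_iff.mp hk))
          have hz2 : min (rk π z) (rk π y) < k :=
            lt_of_le_of_lt (min_le_left _ _)
              (lt_of_lt_of_le (lt_min h1 h2) (Nat.lt_succ_iff.mp hk))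
          calc gdist G w x y ≤ gdist G w x z + gdist G w z y := gdist_tri G w x z y
            _ ≤ m x z + m z y := add_le_add (ih x z hxz hz1) (ih z y hzy hz2)
    intro x y h
    exact key (min (rk π x) (rk π y) + 1) x y h (Nat.lt_succ_self _)
  have lift : ∀ (s t : V) (p : G.Walk s t), gdist (chGraph G π) m s t ≤ wlen w p := by
    intro s t p
    induction p with
    | nil => exact (gdist_le_wlen _ m _ _ Walk.nil).trans_eq (wlen_nil m)
    | @cons a b c h p ih =>
      rw [wlen_cons]
      have hab : gdist (chGraph G π) m a b ≤ m a b :=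
        (gdist_le_wlen _ m a b (Walk.cons (hGle h) Walk.nil)).trans_eq
          (by rw [wlen_cons, wlen_nil, add_zero])
      calc gdist (chGraph G π) m a c
          ≤ gdist (chGraph G π) m a b + gdist (chGraph G π) m b c := gdist_tri _ _ _ _ _
        _ ≤ w a b + wlen w p := add_le_add (hab.trans (hm_le_w a b h)) ih
  have resp_ge : ∀ (s t : V) (p : (chGraph G π).Walk s t), gdist G w s t ≤ wlen m p := by
    intro s t p
    induction p with
    | nil => exact (gdist_le_wlen G w _ _ Walk.nil).trans_eq (wlen_nil w)
    | @cons a b c h p ih =>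
      rw [wlen_cons]
      calc gdist G w a c ≤ gdist G w a b + gdist G w b c := gdist_tri _ _ _ _ _
        _ ≤ m a b + wlen m p := add_le_add (hm_ge a b h) ih
  have resp : ∀ s t, gdist (chGraph G π) m s t = gdist G w s t := by
    intro s t
    refine le_antisymm ?_ ?_
    · exact le_iInf fun p => lift s t p
    · exact le_iInf fun p => resp_ge s t p
  have exUD : ∀ (s t : V) (p : (chGraph G π).Walk s t), ∃ q : (chGraph G π).Walk s t,
      IsUpDown (rk π) q.support ∧ wlen m q ≤ wlen m p := by
    intro s t p
    induction p with
    | nil =>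
      refine ⟨Walk.nil, ?_, le_rfl⟩
      rw [Walk.support_nil]
      exact isUpDown_singleton (rk π) _
    | @cons a b c h p ih =>
      obtain ⟨q', hud', hle'⟩ := ih
      obtain ⟨q₂, hud₂, hle₂⟩ := prependUpDown G π m part1 c q'.length q' le_rfl hud' a h
      refine ⟨q₂, hud₂, ?_⟩
      rw [wlen_cons]
      exact hle₂.trans (add_le_add_right hle' _)
  have cust : ∀ s t, updist G π m s t = gdist (chGraph G π) m s t := by
    intro s t
    refine le_antisymm ?_ ?_
    · refine le_iInf fun p => ?_
      obtain ⟨q, hud, hle⟩ := exUD s t p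
      exact (iInf₂_le q hud).trans hle
    · exact le_iInf fun p => le_iInf fun hp => iInf_le _ p
  exact ⟨part1, resp, cust⟩
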